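/- Let (Ω, F, μ) be a partitionable measure space, let p ∈ [1, ∞), let I be a countable set (|I| ≤ ℵ₀), and let τ : ℝ^I → ℝ. If τ preserves p-integrability over (Ω, F, μ), then there exist a finite subset J ⊆ I and nonnegative real numbers (λ_j)_{j∈J} such that for every v ∈ ℝ^I one has |τ(v)| ≤ Σ_{j∈J} λ_j |v_j|. -/

import Mathlib

open MeasureTheory
open scoped ENNReal

universe u v

/-- `f ∈ L^p(μ)`: `f` is measurable and `∫ |f|^p dμ < ∞`. -/
def MemLpReal {Ω : Type u} [MeasurableSpace Ω] (μ : Measure Ω) (p : ℝ) (f : Ω → ℝ) : Prop :=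
  Measurable f ∧ ∫⁻ x, ENNReal.ofReal (|f x| ^ p) ∂μ < ⊤

/-- `τ` preserves `p`-integrability over the measure space `(Ω, μ)`. -/
def PreservesLpOver {I : Type v} (τ : (I → ℝ) → ℝ) (p : ℝ)
    (Ω : Type u) [MeasurableSpace Ω] (μ : Measure Ω) : Prop :=
  ∀ f : I → Ω → ℝ, (∀ i, MemLpReal μ p (f i)) →
    MemLpReal μ p fun x => τ fun i => f i x

/-- A measure space is partitionable if every sequence of nonnegative reals is attained as
the measures of a sequence of pairwise disjoint measurable sets. -/
def Partitionable {Ω : Type u} [MeasurableSpace Ω] (μ : Measure Ω) : Prop :=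
  ∀ a : ℕ → ℝ, (∀ n, 0 ≤ a n) → ∃ A : ℕ → Set Ω,
    (∀ n, MeasurableSet (A n)) ∧ (∀ m n, m ≠ n → Disjoint (A m) (A n)) ∧
    ∀ n, μ (A n) = ENNReal.ofReal (a n)

theorem preservesLpOver_partitionable_bound {Ω : Type u} [MeasurableSpace Ω]
    (μ : Measure Ω) (hpart : Partitionable μ) (p : ℝ) (hp : 1 ≤ p)
    {I : Type v} [Countable I] (τ : (I → ℝ) → ℝ)
    (h : PreservesLpOver τ p Ω μ) :
    ∃ (J : Finset I) (lam : I → ℝ), (∀ j ∈ J, 0 ≤ lam j) ∧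
      ∀ v : I → ℝ, |τ v| ≤ ∑ j ∈ J, lam j * |v j| := by
  classical
  have hp0 : p ≠ 0 := by positivity
  by_contra hcon
  push_neg at hcon
  rcases isEmpty_or_nonempty I with hI | hI
  · -- empty index type: τ is "constant", and must be 0 since μ is infinite
    obtain ⟨v, hv⟩ := hcon ∅ (fun _ => 0) (by simp)
    simp only [Finset.sum_empty] at hv
    have hf : ∀ i : I, MemLpReal μ p (fun _ : Ω => (0:ℝ)) := fun i => hI.elim i
    have hveq : (fun _ : I => (0:ℝ)) = v := funext fun i => hI.elim i
    have hmem : MemLpReal μ p (fun _ : Ω => τ v) := by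
      simpa [hveq] using h (fun _ _ => 0) hf
    obtain ⟨-, hfin⟩ := hmem
    rw [lintegral_const] at hfin
    obtain ⟨A, hAm, hAd, hAμ⟩ := hpart (fun _ => 1) (fun _ => zero_le_one)
    have h1 : μ (⋃ n, A n) = ⊤ := by
      rw [measure_iUnion (fun m n hmn => hAd m n hmn) hAm]
      simp only [hAμ, ENNReal.ofReal_one]
      exact ENNReal.tsum_const_eq_top_of_ne_zero one_ne_zero
    have htop : μ Set.univ = ⊤ :=
      top_le_iff.mp (h1 ▸ measure_mono (Set.subset_univ _))
    have hne : ENNReal.ofReal (|τ v| ^ p) ≠ 0 := by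
      rw [ne_eq, ENNReal.ofReal_eq_zero, not_le]
      exact Real.rpow_pos_of_pos hv p
    rw [htop, ENNReal.mul_top hne] at hfin
    exact absurd hfin (lt_irrefl ⊤)
  · obtain ⟨g, hg⟩ := exists_surjective_nat I
    have key : ∀ n : ℕ, ∃ w : I → ℝ,
        ∑ j ∈ (Finset.range (n+1)).image g, (2:ℝ)^n * |w j| < |τ w| :=
      fun n => hcon ((Finset.range (n+1)).image g) (fun _ => (2:ℝ)^n)
        (fun j _ => by positivity)
    choose v hv using key
    have htpos : ∀ n, 0 < |τ (v n)| := fun n =>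
      lt_of_le_of_lt (Finset.sum_nonneg fun j _ => by positivity) (hv n)
    set a : ℕ → ℝ := fun n => (|τ (v n)| ^ p)⁻¹ with ha
    have hapos : ∀ n, 0 < a n := fun n =>
      inv_pos.mpr (Real.rpow_pos_of_pos (htpos n) p)
    obtain ⟨A, hAm, hAd, hAμ⟩ := hpart a (fun n => (hapos n).le)
    set f : I → Ω → ℝ := fun i x =>
      (∑' n, (A n).indicator (fun _ => ENNReal.ofReal (v n i)) x).toReal
      - (∑' n, (A n).indicator (fun _ => ENNReal.ofReal (-(v n i))) x).toReal with hfdef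
    have hnotmem : ∀ m n, n ≠ m → ∀ x ∈ A m, x ∉ A n := fun m n hmn x hx =>
      Set.disjoint_left.mp (hAd m n (Ne.symm hmn)) hx
    have htsum_at : ∀ (c : ℕ → ℝ≥0∞) (m : ℕ) (x : Ω), x ∈ A m →
        (∑' n, (A n).indicator (fun _ => c n) x) = c m := by
      intro c m x hx
      rw [tsum_eq_single m fun n hn => Set.indicator_of_notMem (hnotmem m n hn x hx) _,
        Set.indicator_of_mem hx]
    have hfval : ∀ m, ∀ x ∈ A m, ∀ i, f i x = v m i := by
      intro m x hx i
      simp only [hfdef, htsum_at _ m x hx]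
      rcases le_total 0 (v m i) with h0 | h0
      · rw [ENNReal.ofReal_of_nonpos (neg_nonpos.mpr h0), ENNReal.toReal_ofReal h0]
        simp
      · rw [ENNReal.ofReal_of_nonpos h0, ENNReal.toReal_ofReal (neg_nonneg.mpr h0)]
        simp
    have hfzero : ∀ x, (∀ n, x ∉ A n) → ∀ i, f i x = 0 := by
      intro x hx i
      have e : ∀ c : ℕ → ℝ≥0∞, (∑' n, (A n).indicator (fun _ => c n) x) = 0 := by
        intro c
        have e' : (fun n => (A n).indicator (fun _ => c n) x) = fun _ => 0 :=
          funext fun n => Set.indicator_of_notMem (hx n) _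
        rw [e', tsum_zero]
      simp only [hfdef, e, ENNReal.toReal_zero, sub_zero]
    have hfmeas : ∀ i, Measurable (f i) := fun i =>
      ((Measurable.ennreal_tsum fun n =>
        measurable_const.indicator (hAm n)).ennreal_toReal).sub
      ((Measurable.ennreal_tsum fun n =>
        measurable_const.indicator (hAm n)).ennreal_toReal)
    have hmemf : ∀ i, MemLpReal μ p (f i) := by
      intro i
      obtain ⟨k, hk⟩ := hg i
      refine ⟨hfmeas i, ?_⟩
      have hpt : ∀ x, ENNReal.ofReal (|f i x| ^ p)
          = ∑' n, (A n).indicator (fun _ => ENNReal.ofReal (|v n i| ^ p)) x := by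
        intro x
        by_cases hx : ∃ m, x ∈ A m
        · obtain ⟨m, hm⟩ := hx
          rw [hfval m x hm i, htsum_at _ m x hm]
        · push_neg at hx
          have e' : (fun n => (A n).indicator
              (fun _ => ENNReal.ofReal (|v n i| ^ p)) x) = fun _ => 0 :=
            funext fun n => Set.indicator_of_notMem (hx n) _
          rw [hfzero x hx i, e', tsum_zero, abs_zero, Real.zero_rpow hp0,
            ENNReal.ofReal_zero]
      rw [lintegral_congr hpt,
        lintegral_tsum fun n => (measurable_const.indicator (hAm n)).aemeasurable]
      have hterm : ∀ n, ∫⁻ x, (A n).indicator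
          (fun _ => ENNReal.ofReal (|v n i| ^ p)) x ∂μ
          = ENNReal.ofReal (|v n i| ^ p * a n) := by
        intro n
        rw [lintegral_indicator_const (hAm n), hAμ n,
          ← ENNReal.ofReal_mul (by positivity)]
      rw [tsum_congr hterm]
      set b : ℕ → ℝ := fun n => |v n i| ^ p * a n with hb
      have hbnn : ∀ n, 0 ≤ b n := fun n =>
        mul_nonneg (Real.rpow_nonneg (abs_nonneg _) p) (hapos n).le
      have hble : ∀ n, k ≤ n → b n ≤ (1/2 : ℝ)^n := by
        intro n hkn
        have hmem' : i ∈ (Finset.range (n+1)).image g :=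
          Finset.mem_image.mpr ⟨k, Finset.mem_range.mpr (Nat.lt_succ_of_le hkn), hk⟩
        have h2 : (2:ℝ)^n * |v n i| < |τ (v n)| := by
          refine lt_of_le_of_lt
            (Finset.single_le_sum (f := fun j => (2:ℝ)^n * |v n j|) ?_ hmem') (hv n)
          intro j hj
          positivity
        have h2' : |v n i| ≤ |τ (v n)| / 2^n := by
          rw [le_div_iff₀ (by positivity)]
          nlinarith [h2]
        have h3 : |v n i| ^ p ≤ (|τ (v n)| / 2^n) ^ p :=
          Real.rpow_le_rpow (abs_nonneg _) h2' (by linarith)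
        have h4 : (|τ (v n)| / 2^n : ℝ) ^ p = |τ (v n)|^p / ((2:ℝ)^n)^p :=
          Real.div_rpow (abs_nonneg _) (by positivity) p
        have h5 : (2:ℝ)^n ≤ ((2:ℝ)^n) ^ p := by
          calc (2:ℝ)^n = ((2:ℝ)^n) ^ (1:ℝ) := (Real.rpow_one _).symm
          _ ≤ ((2:ℝ)^n)^p :=
            Real.rpow_le_rpow_of_exponent_le (one_le_pow₀ one_le_two) hp
        have htp : (0:ℝ) < |τ (v n)| ^ p := Real.rpow_pos_of_pos (htpos n) p
        have h2p : (0:ℝ) < ((2:ℝ)^n) ^ p := Real.rpow_pos_of_pos (by positivity) p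
        calc b n = |v n i|^p * a n := rfl
        _ ≤ (|τ (v n)|^p / ((2:ℝ)^n)^p) * a n := by
            apply mul_le_mul_of_nonneg_right _ (hapos n).le
            rw [← h4]; exact h3
        _ = (((2:ℝ)^n)^p)⁻¹ := by
            rw [ha]
            field_simp
        _ ≤ ((2:ℝ)^n)⁻¹ := by
            exact inv_anti₀ (by positivity) h5
        _ = (1/2:ℝ)^n := by rw [one_div, inv_pow]
      have hsum : Summable b := by
        rw [← summable_nat_add_iff k]
        refine Summable.of_nonneg_of_le (fun n => hbnn _)
          (fun n => le_trans (hble (n+k) (Nat.le_add_left k n)) ?_)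
          summable_geometric_two
        exact pow_le_pow_of_le_one (by norm_num) (by norm_num) (Nat.le_add_right n k)
      rw [← ENNReal.ofReal_tsum_of_nonneg hbnn hsum]
      exact ENNReal.ofReal_lt_top
    obtain ⟨-, hfin⟩ := h f hmemf
    have hge : ∀ x, (∑' n, (A n).indicator
        (fun _ => ENNReal.ofReal (|τ (v n)| ^ p)) x)
        ≤ ENNReal.ofReal (|τ (fun i => f i x)| ^ p) := by
      intro x
      by_cases hx : ∃ m, x ∈ A m
      · obtain ⟨m, hm⟩ := hx
        rw [htsum_at _ m x hm]
        have e : (fun i => f i x) = v m := funext fun i => hfval m x hm i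
        rw [e]
      · push_neg at hx
        have e' : (fun n => (A n).indicator
            (fun _ => ENNReal.ofReal (|τ (v n)| ^ p)) x) = fun _ => 0 :=
          funext fun n => Set.indicator_of_notMem (hx n) _
        rw [e', tsum_zero]
        exact zero_le
    have htopint : (⊤:ℝ≥0∞) ≤ ∫⁻ x, ENNReal.ofReal (|τ (fun i => f i x)| ^ p) ∂μ := by
      calc (⊤:ℝ≥0∞) = ∑' _ : ℕ, (1:ℝ≥0∞) :=
          (ENNReal.tsum_const_eq_top_of_ne_zero one_ne_zero).symm
      _ = ∑' n, ∫⁻ x, (A n).indicator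
            (fun _ => ENNReal.ofReal (|τ (v n)| ^ p)) x ∂μ := by
          refine tsum_congr fun n => ?_
          rw [lintegral_indicator_const (hAm n), hAμ n,
            ← ENNReal.ofReal_mul (by positivity), ha,
            mul_inv_cancel₀ (ne_of_gt (Real.rpow_pos_of_pos (htpos n) p)),
            ENNReal.ofReal_one]
      _ = ∫⁻ x, ∑' n, (A n).indicator
            (fun _ => ENNReal.ofReal (|τ (v n)| ^ p)) x ∂μ :=
          (lintegral_tsum fun n =>
            (measurable_const.indicator (hAm n)).aemeasurable).symm
      _ ≤ _ := lintegral_mono hge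
    exact absurd (lt_of_le_of_lt htopint hfin) (lt_irrefl ⊤)
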